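/- Let $p,K>0$, $M_3>0$, and let $\rho_2:[0,\infty)\to[0,M_3]$ be continuous. Fix $x_1,x_2$ with $a(x_1)<a(x_2)$, where $a(x_1),a(x_2)\in(1/2,1)$. Let $v,w:[0,\infty)\to(0,\infty)$ be $C^1$ with $v'(t) = (\tfrac{2a(x_1)}{1+K\rho_2(t)}-1)p\,v(t)$ and $w'(t) = (\tfrac{2a(x_2)}{1+K\rho_2(t)}-1)p\,w(t)$. Then $v(t)/w(t) \le (v(0)/w(0))\exp\big(p\tfrac{2(a(x_1)-a(x_2))}{1+KM_3}t\big)$ for all $t\ge 0$, and in particular $v(t)/w(t)\to 0$ exponentially as $t\to\infty$. -/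

import Mathlib

open Filter

theorem quotient_exponential_decay
    (p K M3 a1 a2 : ℝ) (hp : 0 < p) (hK : 0 < K) (hM3 : 0 < M3)
    (ha1 : a1 ∈ Set.Ioo (1/2 : ℝ) 1) (ha2 : a2 ∈ Set.Ioo (1/2 : ℝ) 1)
    (hlt : a1 < a2)
    (ρ2 : ℝ → ℝ) (hρ2_cont : Continuous ρ2)
    (hρ2_range : ∀ t ≥ (0:ℝ), ρ2 t ∈ Set.Icc (0:ℝ) M3)
    (v w : ℝ → ℝ)
    (hv_pos : ∀ t ≥ (0:ℝ), 0 < v t) (hw_pos : ∀ t ≥ (0:ℝ), 0 < w t)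
    (hv : ∀ t ≥ (0:ℝ), HasDerivAt v ((2 * a1 / (1 + K * ρ2 t) - 1) * p * v t) t)
    (hw : ∀ t ≥ (0:ℝ), HasDerivAt w ((2 * a2 / (1 + K * ρ2 t) - 1) * p * w t) t) :
    (∀ t ≥ (0:ℝ), v t / w t ≤ (v 0 / w 0) * Real.exp (p * (2 * (a1 - a2) / (1 + K * M3)) * t)) ∧
    Tendsto (fun t => v t / w t) atTop (nhds 0) := by
  set c : ℝ := p * (2 * (a1 - a2) / (1 + K * M3)) with hc
  have hKM3 : (0:ℝ) < 1 + K * M3 := by positivity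
  have hcneg : c < 0 := by
    apply mul_neg_of_pos_of_neg hp
    apply div_neg_of_neg_of_pos _ hKM3
    linarith
  -- derivative of the quotient
  have hr : ∀ t ≥ (0:ℝ), HasDerivAt (fun t => v t / w t)
      ((2 * (a1 - a2) / (1 + K * ρ2 t)) * p * (v t / w t)) t := by
    intro t ht
    have hwt := (hw_pos t ht).ne'
    have hρ := hρ2_range t ht
    have hden : (0:ℝ) < 1 + K * ρ2 t := by nlinarith [hρ.1]
    have h := (hv t ht).div (hw t ht) hwt
    refine h.congr_deriv ?_
    field_simp
    ring
  -- the auxiliary function g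
  set g : ℝ → ℝ := fun t => (v t / w t) * Real.exp (-c * t) with hg
  have hg' : ∀ t ≥ (0:ℝ), HasDerivAt g
      (((2 * (a1 - a2) / (1 + K * ρ2 t)) * p - c) * (v t / w t) * Real.exp (-c * t)) t := by
    intro t ht
    have he : HasDerivAt (fun t : ℝ => Real.exp (-c * t)) (Real.exp (-c * t) * -c) t := by
      simpa using ((hasDerivAt_id t).const_mul (-c)).exp
    have := (hr t ht).mul he
    refine this.congr_deriv ?_
    ring
  have hderiv_nonpos : ∀ t ≥ (0:ℝ), deriv g t ≤ 0 := by
    intro t ht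
    rw [(hg' t ht).deriv]
    have hρ := hρ2_range t ht
    have hden : (0:ℝ) < 1 + K * ρ2 t := by nlinarith [hρ.1]
    have hle : 2 * (a1 - a2) / (1 + K * ρ2 t) * p - c ≤ 0 := by
      have hdle : 1 + K * ρ2 t ≤ 1 + K * M3 := by nlinarith [hρ.2]
      have h1 : 2 * (a1 - a2) / (1 + K * ρ2 t) ≤ 2 * (a1 - a2) / (1 + K * M3) := by
        rw [div_le_div_iff₀ hden hKM3]; nlinarith
      have h2 := mul_le_mul_of_nonneg_right h1 hp.le
      have h3 : c = 2 * (a1 - a2) / (1 + K * M3) * p := by rw [hc]; ring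
      rw [h3]; linarith
    have hpos : 0 < v t / w t := div_pos (hv_pos t ht) (hw_pos t ht)
    exact mul_nonpos_of_nonpos_of_nonneg
      (mul_nonpos_of_nonpos_of_nonneg hle hpos.le) (Real.exp_pos _).le
  have hanti : AntitoneOn g (Set.Ici (0:ℝ)) := by
    apply antitoneOn_of_deriv_nonpos (convex_Ici 0)
    · intro t ht
      exact ((hg' t ht).differentiableAt).continuousAt.continuousWithinAt
    · intro t ht
      rw [interior_Ici] at ht
      exact ((hg' t (le_of_lt ht)).differentiableAt).differentiableWithinAt
    · intro t ht
      rw [interior_Ici] at ht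
      exact hderiv_nonpos t (le_of_lt ht)
  have hmain : ∀ t ≥ (0:ℝ), v t / w t ≤ (v 0 / w 0) * Real.exp (c * t) := by
    intro t ht
    have h := hanti Set.self_mem_Ici ht ht
    have h0 : g 0 = v 0 / w 0 := by simp [hg]
    rw [h0] at h
    have hexp : (0:ℝ) < Real.exp (-c * t) := Real.exp_pos _
    rw [show g t = v t / w t * Real.exp (-c * t) from rfl, ← le_div_iff₀ hexp] at h
    rw [neg_mul, Real.exp_neg] at h
    have heq : v 0 / w 0 / (Real.exp (c * t))⁻¹ = v 0 / w 0 * Real.exp (c * t) := by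
      field_simp
    rwa [heq] at h
  refine ⟨hmain, ?_⟩
  have htends : Tendsto (fun t => (v 0 / w 0) * Real.exp (c * t)) atTop (nhds 0) := by
    have h1 : Tendsto (fun t : ℝ => c * t) atTop atBot :=
      tendsto_id.const_mul_atTop_of_neg hcneg
    have h2 : Tendsto (fun t : ℝ => Real.exp (c * t)) atTop (nhds 0) :=
      Real.tendsto_exp_atBot.comp h1
    simpa using h2.const_mul (v 0 / w 0)
  apply squeeze_zero' ?_ ?_ htends
  · filter_upwards [eventually_ge_atTop (0:ℝ)] with t ht
    exact le_of_lt (div_pos (hv_pos t ht) (hw_pos t ht))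
  · filter_upwards [eventually_ge_atTop (0:ℝ)] with t ht
    exact hmain t ht
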